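/- arXiv:2306.09276 — 7 statements merged into one kernel-verified Lean document; each statement's English description precedes it below -/
import Mathlib

section
/- A corner-connection knot mosaic of size 2 (a 2-mosaic) contains no four-connection-point tiles; in particular, a 2-mosaic cannot contain a crossing tile. -/
/-- The eleven corner-connection tile types. -/
inductive Tile : Type
  | T0 | T1 | T2 | T3 | T4 | T5 | T6 | T7 | T8 | T9 | T10
  deriving DecidableEq

open Tile

/-- `cp t a b = true` iff tile `t` has a connection point at the corner of its cell
with vertical offset `a` (`false` = top, `true` = bottom) and horizontal offset `b`
(`false` = left, `true` = right).  `T0` is blank; `T1`–`T4` are the single-arc tiles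
(connection points at the two corners of one side, the four sides in order top,
bottom, left, right); `T5`, `T6` are the diagonal segment tiles ({TL, BR} and
{TR, BL}); `T7`–`T10` (double arcs and crossings) use all four corners. -/
def cp : Tile → Bool → Bool → Bool
  | T0, _, _ => false
  | T1, a, _ => !a
  | T2, a, _ => a
  | T3, _, b => !b
  | T4, _, b => b
  | T5, a, b => a == b
  | T6, a, b => a != b
  | _, _, _ => true

/-- Crossing tiles. -/
def isCrossing : Tile → Bool
  | T9 | T10 => true
  | _ => false

/-- Tiles with four connection points. -/
def isFourCP : Tile → Bool
  | T7 | T8 | T9 | T10 => true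
  | _ => false

/-- Double-arc tiles. -/
def isDoubleArc : Tile → Bool
  | T7 | T8 => true
  | _ => false

/-- The number of connection-point incidences at the grid vertex `(r, c)`:
the number of cells incident to this vertex whose tile has a connection point
at the corresponding corner.  (The cell incident to `(r, c)` via its corner
with offsets `(a, b)` is the cell `(r - a, c - b)`, which exists iff `a ≤ r`
and `b ≤ c`.) -/
def vertexCount (M : ℕ → ℕ → Tile) (r c : ℕ) : ℕ :=
  ∑ p : Bool × Bool,
    if p.1.toNat ≤ r ∧ p.2.toNat ≤ c ∧
        cp (M (r - p.1.toNat) (c - p.2.toNat)) p.1 p.2 = true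
    then 1 else 0

/-- A corner-connection knot mosaic with `m` rows and `n` columns: a tiling of the
`m × n` grid (cells outside the grid are blank) that is suitably connected with no
triple points, i.e. every vertex of the `(m+1) × (n+1)` grid of cell corners has
exactly 0 or 2 connection-point incidences. -/
def IsKnotMosaicRect (m n : ℕ) (M : ℕ → ℕ → Tile) : Prop :=
  (∀ i j, m ≤ i ∨ n ≤ j → M i j = Tile.T0) ∧
  (∀ r c, r ≤ m → c ≤ n → vertexCount M r c = 0 ∨ vertexCount M r c = 2)

/-- A corner-connection knot `n`-mosaic (square, `n` rows and `n` columns). -/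
def IsKnotMosaic (n : ℕ) (M : ℕ → ℕ → Tile) : Prop :=
  IsKnotMosaicRect n n M

/-- The number of crossing tiles in the `m × n` grid. -/
def crossingCountRect (m n : ℕ) (M : ℕ → ℕ → Tile) : ℕ :=
  ((Finset.range m ×ˢ Finset.range n).filter
    (fun p => isCrossing (M p.1 p.2) = true)).card

/-- The number of crossing tiles in the `n × n` grid. -/
def crossingCount (n : ℕ) (M : ℕ → ℕ → Tile) : ℕ :=
  crossingCountRect n n M

/-- A corner-connection knot 2-mosaic contains no four-connection-point tiles;
in particular, it contains no crossing tile. -/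
theorem two_mosaic_no_fourCP
    (M : ℕ → ℕ → Tile) (hM : IsKnotMosaic 2 M) :
    ∀ i j, i < 2 → j < 2 →
      isFourCP (M i j) = false ∧ isCrossing (M i j) = false := by
  have hb : ∀ i j, 2 ≤ i ∨ 2 ≤ j → M i j = Tile.T0 := hM.1
  have key : ∀ t : Tile, cp t false false = false ∨ cp t false true = false ∨
      cp t true false = false ∨ cp t true true = false →
      isFourCP t = false ∧ isCrossing t = false := by
    intro t h
    cases t <;> simp_all [cp, isFourCP, isCrossing]
  have cpT0 : ∀ a b, cp Tile.T0 a b = false := by decide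
  have expand : ∀ f : Bool × Bool → ℕ, ∑ p : Bool × Bool, f p =
      f (false, false) + f (false, true) + f (true, false) + f (true, true) := by
    intro f
    rw [Fintype.sum_prod_type]
    simp [Fintype.sum_bool]
    ring
  intro i j hi hj
  interval_cases i <;> interval_cases j
  · have h := hM.2 0 0 (by norm_num) (by norm_num)
    unfold vertexCount at h
    rw [expand] at h
    simp at h
    apply key
    by_cases hc : cp (M 0 0) false false = true
    · simp [hc] at h
    · simp at hc; tauto
  · have h := hM.2 0 2 (by norm_num) (by norm_num)
    unfold vertexCount at h
    rw [expand] at h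
    simp [hb 0 2 (Or.inr le_rfl), cpT0] at h
    apply key
    by_cases hc : cp (M 0 1) false true = true
    · simp [hc] at h
    · simp at hc; tauto
  · have h := hM.2 2 0 (by norm_num) (by norm_num)
    unfold vertexCount at h
    rw [expand] at h
    simp [hb 2 0 (Or.inl le_rfl), cpT0] at h
    apply key
    by_cases hc : cp (M 1 0) true false = true
    · simp [hc] at h
    · simp at hc; tauto
  · have h := hM.2 2 2 (by norm_num) (by norm_num)
    unfold vertexCount at h
    rw [expand] at h
    simp [hb 2 2 (Or.inl le_rfl), hb 2 1 (Or.inl le_rfl), hb 1 2 (Or.inr le_rfl), cpT0] at h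
    apply key
    by_cases hc : cp (M 1 1) true true = true
    · simp [hc] at h
    · simp at hc; tauto
end

section
/- A corner-connection knot mosaic of size 3 (a 3-mosaic) contains at most 4 crossing tiles. -/
open Tile

lemma cp_T0 (a b : Bool) : cp Tile.T0 a b = false := rfl

lemma fourCP_cp {t : Tile} (h : isFourCP t = true) (a b : Bool) : cp t a b = true := by
  cases t <;> cases a <;> cases b <;> simp_all [isFourCP, cp]

lemma crossing_fourCP {t : Tile} (h : isCrossing t = true) : isFourCP t = true := by
  cases t <;> simp_all [isCrossing, isFourCP]

/-- A corner-connection knot 3-mosaic contains at most 4 crossing tiles. -/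
theorem three_mosaic_at_most_four_crossings
    (M : ℕ → ℕ → Tile) (hM : IsKnotMosaic 3 M) :
    crossingCount 3 M ≤ 4 := by
  obtain ⟨hb, hv⟩ := hM
  -- corner cells have no four-connection-point tile
  have h00 : isFourCP (M 0 0) = false := by
    have h := hv 0 0 (by norm_num) (by norm_num)
    simp only [vertexCount, Fintype.sum_prod_type, Fintype.sum_bool, Bool.toNat_true,
      Bool.toNat_false] at h
    norm_num at h
    by_contra hc
    simp only [Bool.not_eq_false] at hc
    rw [fourCP_cp hc] at h
    simp at h
  have h02 : isFourCP (M 0 2) = false := by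
    have h := hv 0 3 (by norm_num) (by norm_num)
    simp only [vertexCount, Fintype.sum_prod_type, Fintype.sum_bool, Bool.toNat_true,
      Bool.toNat_false] at h
    norm_num [hb 0 3 (Or.inr le_rfl), cp_T0] at h
    by_contra hc
    simp only [Bool.not_eq_false] at hc
    rw [fourCP_cp hc] at h
    simp at h
  have h20 : isFourCP (M 2 0) = false := by
    have h := hv 3 0 (by norm_num) (by norm_num)
    simp only [vertexCount, Fintype.sum_prod_type, Fintype.sum_bool, Bool.toNat_true,
      Bool.toNat_false] at h
    norm_num [hb 3 0 (Or.inl le_rfl), cp_T0] at h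
    by_contra hc
    simp only [Bool.not_eq_false] at hc
    rw [fourCP_cp hc] at h
    simp at h
  have h22 : isFourCP (M 2 2) = false := by
    have h := hv 3 3 (by norm_num) (by norm_num)
    simp only [vertexCount, Fintype.sum_prod_type, Fintype.sum_bool, Bool.toNat_true,
      Bool.toNat_false] at h
    norm_num [hb 3 3 (Or.inl le_rfl), hb 3 2 (Or.inl le_rfl), hb 2 3 (Or.inr le_rfl), cp_T0] at h
    by_contra hc
    simp only [Bool.not_eq_false] at hc
    rw [fourCP_cp hc] at h
    simp at h
  -- the crossings are contained in the five non-corner cells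
  set s := ((Finset.range 3 ×ˢ Finset.range 3).filter
    (fun p => isCrossing (M p.1 p.2) = true)) with hs
  have hsub : s ⊆ ({(0,1),(1,0),(1,1),(1,2),(2,1)} : Finset (ℕ × ℕ)) := by
    rintro ⟨i, j⟩ hp
    simp only [hs, Finset.mem_filter, Finset.mem_product, Finset.mem_range] at hp
    obtain ⟨⟨hi, hj⟩, hcr⟩ := hp
    have hf := crossing_fourCP hcr
    interval_cases i <;> interval_cases j <;> simp_all
  have hcard : s.card ≤ 5 := le_trans (Finset.card_le_card hsub) (by decide)
  -- if there were 5 crossings, vertex (1,1) would have ≥ 3 incidences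
  show s.card ≤ 4
  by_contra hc
  push_neg at hc
  have h5 : s.card = 5 := le_antisymm hcard hc
  have heq : s = ({(0,1),(1,0),(1,1),(1,2),(2,1)} : Finset (ℕ × ℕ)) :=
    Finset.eq_of_subset_of_card_le hsub (by rw [h5]; decide)
  have mem : ∀ p ∈ ({(0,1),(1,0),(1,1)} : Finset (ℕ × ℕ)), isCrossing (M p.1 p.2) = true := by
    intro p hp
    have : p ∈ s := by rw [heq]; fin_cases hp <;> decide
    simp only [hs, Finset.mem_filter] at this
    exact this.2
  have c01 : isFourCP (M 0 1) = true := crossing_fourCP (mem (0,1) (by decide))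
  have c10 : isFourCP (M 1 0) = true := crossing_fourCP (mem (1,0) (by decide))
  have c11 : isFourCP (M 1 1) = true := crossing_fourCP (mem (1,1) (by decide))
  have h := hv 1 1 (by norm_num) (by norm_num)
  simp only [vertexCount, Fintype.sum_prod_type, Fintype.sum_bool, Bool.toNat_true,
    Bool.toNat_false] at h
  norm_num [fourCP_cp c01, fourCP_cp c10, fourCP_cp c11] at h
end

section
/- If the center tile of a corner-connection knot mosaic of size 3 (the cell in position (1,1)) is a crossing tile, then the mosaic contains at most 3 crossing tiles, and either all crossing tiles lie in the middle row or all crossing tiles lie in the middle column. -/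
open Tile

instance : Fintype Tile :=
  ⟨⟨↑[T0, T1, T2, T3, T4, T5, T6, T7, T8, T9, T10], by decide⟩, fun x => by cases x <;> decide⟩

def W (x : Bool) : ℕ := if x = true then 1 else 0

abbrev E (n : ℕ) : Prop := n = 0 ∨ n = 2

instance : DecidablePred E := fun n => inferInstanceAs (Decidable (n = 0 ∨ n = 2))

lemma vcL1 (M : ℕ → ℕ → Tile) : vertexCount M 0 0 = W (cp (M 0 0) false false) := by
  simp only [vertexCount, W, Fintype.sum_prod_type, Fintype.sum_bool, Bool.toNat_true,
    Bool.toNat_false, Nat.sub_zero, Nat.le_zero, Nat.zero_le, true_and, one_ne_zero, false_and,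
    if_false, Nat.zero_add, Nat.add_zero, if_true]

lemma vcL2 (M : ℕ → ℕ → Tile) (c : ℕ) (hc : 1 ≤ c) :
    vertexCount M 0 c = W (cp (M 0 (c - 1)) false true) + W (cp (M 0 c) false false) := by
  simp only [vertexCount, W, Fintype.sum_prod_type, Fintype.sum_bool, Bool.toNat_true,
    Bool.toNat_false, Nat.sub_zero, Nat.le_zero, Nat.zero_le, true_and, one_ne_zero, false_and,
    if_false, Nat.zero_add, Nat.add_zero, if_true, hc]

lemma vcL3 (M : ℕ → ℕ → Tile) (r : ℕ) (hr : 1 ≤ r) :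
    vertexCount M r 0 = W (cp (M (r - 1) 0) true false) + W (cp (M r 0) false false) := by
  simp only [vertexCount, W, Fintype.sum_prod_type, Fintype.sum_bool, Bool.toNat_true,
    Bool.toNat_false, Nat.sub_zero, Nat.le_zero, Nat.zero_le, true_and, one_ne_zero, false_and,
    if_false, Nat.zero_add, Nat.add_zero, if_true, hr]

lemma vcL4 (M : ℕ → ℕ → Tile) (r c : ℕ) (hr : 1 ≤ r) (hc : 1 ≤ c) :
    vertexCount M r c = (W (cp (M (r - 1) (c - 1)) true true) + W (cp (M (r - 1) c) true false)) +
      (W (cp (M r (c - 1)) false true) + W (cp (M r c) false false)) := by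
  simp only [vertexCount, W, Fintype.sum_prod_type, Fintype.sum_bool, Bool.toNat_true,
    Bool.toNat_false, Nat.sub_zero, Nat.le_zero, Nat.zero_le, true_and, one_ne_zero, false_and,
    if_false, Nat.zero_add, Nat.add_zero, if_true, hr, hc]

lemma ccEq (M : ℕ → ℕ → Tile) : crossingCount 3 M =
    W (isCrossing (M 0 0)) + W (isCrossing (M 0 1)) + W (isCrossing (M 0 2)) +
    W (isCrossing (M 1 0)) + W (isCrossing (M 1 1)) + W (isCrossing (M 1 2)) +
    W (isCrossing (M 2 0)) + W (isCrossing (M 2 1)) + W (isCrossing (M 2 2)) := by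
  simp only [crossingCount, crossingCountRect, Finset.card_filter, Finset.sum_product,
    Finset.sum_range_succ, Finset.sum_range_zero, W]
  ring

set_option maxRecDepth 10000 in
set_option synthInstance.maxSize 2000 in
set_option synthInstance.maxHeartbeats 1000000 in
set_option maxHeartbeats 2000000 in
theorem mainP : ∀ a : Tile, E (W (cp a false false)) →
    ∀ b : Tile, E (W (cp a false true) + W (cp b false false)) →
    ∀ c : Tile, E (W (cp b false true) + W (cp c false false)) →
      E (W (cp c false true) + W (cp T0 false false)) →
    ∀ d : Tile, E (W (cp a true false) + W (cp d false false)) →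
    ∀ e : Tile, isCrossing e = true →
      E ((W (cp a true true) + W (cp b true false)) + (W (cp d false true) + W (cp e false false))) →
    ∀ f : Tile, E ((W (cp b true true) + W (cp c true false)) + (W (cp e false true) + W (cp f false false))) →
      E ((W (cp c true true) + W (cp T0 true false)) + (W (cp f false true) + W (cp T0 false false))) →
    ∀ g : Tile, E (W (cp d true false) + W (cp g false false)) →
      E (W (cp g true false) + W (cp T0 false false)) →
    ∀ h : Tile, E ((W (cp d true true) + W (cp e true false)) + (W (cp g false true) + W (cp h false false))) →
      E ((W (cp g true true) + W (cp h true false)) + (W (cp T0 false true) + W (cp T0 false false))) →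
    ∀ i : Tile, E ((W (cp e true true) + W (cp f true false)) + (W (cp h false true) + W (cp i false false))) →
      E ((W (cp f true true) + W (cp T0 true false)) + (W (cp i false true) + W (cp T0 false false))) →
      E ((W (cp h true true) + W (cp i true false)) + (W (cp T0 false true) + W (cp T0 false false))) →
      E ((W (cp i true true) + W (cp T0 true false)) + (W (cp T0 false true) + W (cp T0 false false))) →
    (W (isCrossing a) + W (isCrossing b) + W (isCrossing c) + W (isCrossing d) + W (isCrossing e) +
      W (isCrossing f) + W (isCrossing g) + W (isCrossing h) + W (isCrossing i) ≤ 3) ∧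
    ((isCrossing a = false ∧ isCrossing b = false ∧ isCrossing c = false ∧
      isCrossing g = false ∧ isCrossing h = false ∧ isCrossing i = false) ∨
     (isCrossing a = false ∧ isCrossing c = false ∧ isCrossing d = false ∧
      isCrossing f = false ∧ isCrossing g = false ∧ isCrossing i = false)) := by
  decide


/-- If the center tile of a corner-connection knot 3-mosaic is a crossing tile,
then the mosaic contains at most 3 crossing tiles, and either all crossing tiles
lie in the middle row or all crossing tiles lie in the middle column. -/
theorem three_mosaic_center_crossing
    (M : ℕ → ℕ → Tile) (hM : IsKnotMosaic 3 M)
    (hcenter : isCrossing (M 1 1) = true) :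
    crossingCount 3 M ≤ 3 ∧
    ((∀ i j, i < 3 → j < 3 → isCrossing (M i j) = true → i = 1) ∨
     (∀ i j, i < 3 → j < 3 → isCrossing (M i j) = true → j = 1)) := by
  obtain ⟨hout, hvc⟩ := hM
  have o03 : M 0 3 = Tile.T0 := hout 0 3 (Or.inr le_rfl)
  have o13 : M 1 3 = Tile.T0 := hout 1 3 (Or.inr le_rfl)
  have o23 : M 2 3 = Tile.T0 := hout 2 3 (Or.inr le_rfl)
  have o30 : M 3 0 = Tile.T0 := hout 3 0 (Or.inl le_rfl)
  have o31 : M 3 1 = Tile.T0 := hout 3 1 (Or.inl le_rfl)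
  have o32 : M 3 2 = Tile.T0 := hout 3 2 (Or.inl le_rfl)
  have o33 : M 3 3 = Tile.T0 := hout 3 3 (Or.inl le_rfl)
  have e00 := hvc 0 0 (by norm_num) (by norm_num); rw [vcL1] at e00
  have e01 := hvc 0 1 (by norm_num) (by norm_num); rw [vcL2 M 1 le_rfl] at e01
  have e02 := hvc 0 2 (by norm_num) (by norm_num); rw [vcL2 M 2 (by norm_num)] at e02
  have e03 := hvc 0 3 (by norm_num) (by norm_num); rw [vcL2 M 3 (by norm_num)] at e03; simp only [Nat.sub_self, show (3:ℕ)-1=2 from rfl, o03] at e03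
  have e10 := hvc 1 0 (by norm_num) (by norm_num); rw [vcL3 M 1 le_rfl] at e10
  have e11 := hvc 1 1 (by norm_num) (by norm_num); rw [vcL4 M 1 1 le_rfl le_rfl] at e11
  have e12 := hvc 1 2 (by norm_num) (by norm_num); rw [vcL4 M 1 2 le_rfl (by norm_num)] at e12
  have e13 := hvc 1 3 (by norm_num) (by norm_num)
  rw [vcL4 M 1 3 le_rfl (by norm_num)] at e13; simp only [Nat.sub_self, show (3:ℕ)-1=2 from rfl, o03, o13] at e13
  have e20 := hvc 2 0 (by norm_num) (by norm_num); rw [vcL3 M 2 (by norm_num)] at e20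
  have e21 := hvc 2 1 (by norm_num) (by norm_num); rw [vcL4 M 2 1 (by norm_num) le_rfl] at e21
  have e22 := hvc 2 2 (by norm_num) (by norm_num)
  rw [vcL4 M 2 2 (by norm_num) (by norm_num)] at e22
  have e23 := hvc 2 3 (by norm_num) (by norm_num)
  rw [vcL4 M 2 3 (by norm_num) (by norm_num)] at e23; simp only [show (2:ℕ)-1=1 from rfl, show (3:ℕ)-1=2 from rfl, o13, o23] at e23
  have e30 := hvc 3 0 (by norm_num) (by norm_num); rw [vcL3 M 3 (by norm_num)] at e30; simp only [show (3:ℕ)-1=2 from rfl, o30] at e30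
  have e31 := hvc 3 1 (by norm_num) (by norm_num)
  rw [vcL4 M 3 1 (by norm_num) le_rfl] at e31; simp only [Nat.sub_self, show (3:ℕ)-1=2 from rfl, o30, o31] at e31
  have e32 := hvc 3 2 (by norm_num) (by norm_num)
  rw [vcL4 M 3 2 (by norm_num) (by norm_num)] at e32; simp only [show (2:ℕ)-1=1 from rfl, show (3:ℕ)-1=2 from rfl, o31, o32] at e32
  have e33 := hvc 3 3 (by norm_num) (by norm_num)
  rw [vcL4 M 3 3 (by norm_num) (by norm_num)] at e33; simp only [show (3:ℕ)-1=2 from rfl, o23, o32, o33] at e33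
  have key := mainP (M 0 0) e00 (M 0 1) e01 (M 0 2) e02 e03 (M 1 0) e10 (M 1 1) hcenter e11
    (M 1 2) e12 e13 (M 2 0) e20 e30 (M 2 1) e21 e31 (M 2 2) e22 e23 e32 e33
  constructor
  · have hcc := ccEq M
    have k1 := key.1
    omega
  · rcases key.2 with ⟨r1, r2, r3, r4, r5, r6⟩ | ⟨r1, r2, r3, r4, r5, r6⟩
    · left
      intro i j hi hj hcr
      interval_cases i <;> interval_cases j <;>
        first
          | rfl
          | (simp only [r1, r2, r3, r4, r5, r6] at hcr; exact Bool.noConfusion hcr)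
    · right
      intro i j hi hj hcr
      interval_cases i <;> interval_cases j <;>
        first
          | rfl
          | (simp only [r1, r2, r3, r4, r5, r6] at hcr; exact Bool.noConfusion hcr)
end

section
/- If a tile in the top row of a corner-connection knot mosaic is a four-connection-point tile, then it is not in the leftmost column and the tile immediately to its left is non-blank, and it is not in the rightmost column and the tile immediately to its right is non-blank. In particular, the first non-blank tile (from left to right) in the top row of a knot mosaic is never a four-connection-point tile. -/
open Tile

lemma vc0 (M : ℕ → ℕ → Tile) (c : ℕ) :
    vertexCount M 0 c =
      (if cp (M 0 c) false false = true then 1 else 0) +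
      (if 1 ≤ c ∧ cp (M 0 (c - 1)) false true = true then 1 else 0) := by
  rw [vertexCount, Fintype.sum_prod_type]
  simp only [Fintype.sum_bool, Bool.toNat_true, Bool.toNat_false, Nat.sub_zero,
    Nat.le_zero, one_ne_zero, false_and, if_false, Nat.zero_le, true_and, zero_add]
  omega

lemma cp_of_fourCP (t : Tile) (ht : isFourCP t = true) (b : Bool) :
    cp t false b = true := by
  cases t <;> simp_all [isFourCP] <;> cases b <;> rfl

lemma ne_T0_of_cp (t : Tile) (a b : Bool) (h : cp t a b = true) : t ≠ Tile.T0 := by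
  rintro rfl; simp [cp] at h

/-- If a tile in the top row of a corner-connection knot mosaic is a
four-connection-point tile, then it is not in the leftmost column and the tile
immediately to its left is non-blank, and it is not in the rightmost column and
the tile immediately to its right is non-blank.  In particular, the first
non-blank tile (from left to right) in the top row is never a
four-connection-point tile. -/
theorem top_row_fourCP_has_nonblank_neighbors
    (n : ℕ) (M : ℕ → ℕ → Tile) (hM : IsKnotMosaic n M) :
    (∀ j, j < n → isFourCP (M 0 j) = true →
      0 < j ∧ M 0 (j - 1) ≠ Tile.T0 ∧ j + 1 < n ∧ M 0 (j + 1) ≠ Tile.T0) ∧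
    (∀ j, j < n → M 0 j ≠ Tile.T0 → (∀ k, k < j → M 0 k = Tile.T0) →
      isFourCP (M 0 j) = false) := by
  obtain ⟨hblank, hvert⟩ := hM
  have main : ∀ j, j < n → isFourCP (M 0 j) = true →
      0 < j ∧ M 0 (j - 1) ≠ Tile.T0 ∧ j + 1 < n ∧ M 0 (j + 1) ≠ Tile.T0 := by
    intro j hj hfour
    have h1 := hvert 0 j (Nat.zero_le n) (le_of_lt hj)
    have h2 := hvert 0 (j+1) (Nat.zero_le n) hj
    rw [vc0] at h1 h2
    have c1 : cp (M 0 j) false false = true := cp_of_fourCP _ hfour false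
    have c2 : cp (M 0 j) false true = true := cp_of_fourCP _ hfour true
    simp only [Nat.add_sub_cancel] at h2
    have e1 : (if cp (M 0 j) false false = true then 1 else 0) = 1 := if_pos c1
    have e2 : (if 1 ≤ j + 1 ∧ cp (M 0 j) false true = true then 1 else 0) = 1 :=
      if_pos ⟨Nat.le_add_left 1 j, c2⟩
    rw [e1] at h1
    rw [e2] at h2
    have hleft : 1 ≤ j ∧ cp (M 0 (j - 1)) false true = true := by
      by_contra hc
      rw [if_neg hc] at h1; omega
    have hright : cp (M 0 (j+1)) false false = true := by
      by_contra hc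
      rw [if_neg hc] at h2; omega
    refine ⟨hleft.1, ne_T0_of_cp _ _ _ hleft.2, ?_, ne_T0_of_cp _ _ _ hright⟩
    by_contra hc
    have := hblank 0 (j+1) (Or.inr (by omega))
    rw [this] at hright; simp [cp] at hright
  refine ⟨main, ?_⟩
  intro j hj hne hfirst
  by_contra hc
  rw [Bool.not_eq_false] at hc
  obtain ⟨hpos, hleft, -, -⟩ := main j hj hc
  exact hleft (hfirst (j-1) (by omega))
end

section
/- For any even n ≥ 3, the number of crossing tiles in a corner-connection knot mosaic of size n is at most n²/2. -/
open Tile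

lemma cp_of_isCrossing {t : Tile} (h : isCrossing t = true) (a b : Bool) :
    cp t a b = true := by
  cases t <;> simp_all [isCrossing, cp]

lemma vc_card (M : ℕ → ℕ → Tile) (r c : ℕ) :
    vertexCount M r c =
      (Finset.univ.filter (fun p : Bool × Bool =>
        p.1.toNat ≤ r ∧ p.2.toNat ≤ c ∧
        cp (M (r - p.1.toNat) (c - p.2.toNat)) p.1 p.2 = true)).card := by
  rw [vertexCount, Finset.card_filter]

/-- For any even `n ≥ 3`, a corner-connection knot `n`-mosaic has at most `n² / 2`
crossing tiles. -/
theorem max_crossings_even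
    (n : ℕ) (hn : 3 ≤ n) (hpar : Even n)
    (M : ℕ → ℕ → Tile) (hM : IsKnotMosaic n M) :
    crossingCount n M ≤ n ^ 2 / 2 := by
  classical
  obtain ⟨m, hm⟩ := hpar
  set C := (Finset.range n ×ˢ Finset.range n).filter
    (fun p => isCrossing (M p.1 p.2) = true) with hC
  have hmem : ∀ p ∈ C, (p.1 / 2, p.2 / 2) ∈ Finset.range m ×ˢ Finset.range m := by
    intro p hp
    simp only [hC, Finset.mem_filter, Finset.mem_product, Finset.mem_range] at hp ⊢
    omega
  have hsum : C.card = ∑ b ∈ Finset.range m ×ˢ Finset.range m,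
      (C.filter (fun p => (p.1 / 2, p.2 / 2) = b)).card :=
    Finset.card_eq_sum_card_fiberwise hmem
  have key : ∀ b ∈ Finset.range m ×ˢ Finset.range m,
      (C.filter (fun p => (p.1 / 2, p.2 / 2) = b)).card ≤ 2 := by
    rintro ⟨k, j⟩ hb
    simp only [Finset.mem_product, Finset.mem_range] at hb
    have hvc := hM.2 (2*k+1) (2*j+1) (by omega) (by omega)
    have hle : vertexCount M (2*k+1) (2*j+1) ≤ 2 := by omega
    rw [vc_card] at hle
    refine le_trans ?_ hle
    apply Finset.card_le_card_of_injOn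
      (fun p => ((decide (p.1 = 2*k)), (decide (p.2 = 2*j))))
    · intro p hp
      simp only [hC, Finset.mem_coe, Finset.mem_filter, Finset.mem_product, Finset.mem_range,
        Prod.mk.injEq] at hp
      obtain ⟨⟨⟨h1, h2⟩, hcr⟩, hk', hj'⟩ := hp
      have hp1 : p.1 = 2*k ∨ p.1 = 2*k+1 := by omega
      have hp2 : p.2 = 2*j ∨ p.2 = 2*j+1 := by omega
      simp only [Finset.mem_coe, Finset.mem_filter, Finset.mem_univ, true_and]
      have e1 : 2*k+1 - (decide (p.1 = 2*k)).toNat = p.1 := by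
        rcases hp1 with h | h <;> simp [h]
      have e2 : 2*j+1 - (decide (p.2 = 2*j)).toNat = p.2 := by
        rcases hp2 with h | h <;> simp [h]
      refine ⟨?_, ?_, ?_⟩
      · cases h : decide (p.1 = 2*k) <;> simp [h]
      · cases h : decide (p.2 = 2*j) <;> simp [h]
      · rw [e1, e2]; exact cp_of_isCrossing hcr _ _
    · intro p hp q hq hpq
      simp only [hC, Finset.mem_coe, Finset.mem_filter, Finset.mem_product,
        Finset.mem_range, Prod.mk.injEq] at hp hq
      obtain ⟨⟨⟨hp1, hp2⟩, _⟩, hpk, hpj⟩ := hp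
      obtain ⟨⟨⟨hq1, hq2⟩, _⟩, hqk, hqj⟩ := hq
      have h1 : decide (p.1 = 2*k) = decide (q.1 = 2*k) := congrArg Prod.fst hpq
      have h2 : decide (p.2 = 2*j) = decide (q.2 = 2*j) := congrArg Prod.snd hpq
      have hd1 : (p.1 = 2*k) = (q.1 = 2*k) := by
        have := congrArg (fun b => b = true) h1
        simpa using this
      have hd2 : (p.2 = 2*j) = (q.2 = 2*j) := by
        have := congrArg (fun b => b = true) h2
        simpa using this
      have : p.1 = q.1 := by
        rcases iff_of_eq hd1 with ⟨hf, hg⟩; omega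
      have : p.2 = q.2 := by
        rcases iff_of_eq hd2 with ⟨hf, hg⟩; omega
      exact Prod.ext (by omega) (by omega)
  have hC2 : C.card ≤ 2 * (m * m) := by
    rw [hsum]
    calc ∑ b ∈ Finset.range m ×ˢ Finset.range m,
        (C.filter (fun p => (p.1 / 2, p.2 / 2) = b)).card
        ≤ ∑ _b ∈ Finset.range m ×ˢ Finset.range m, 2 := Finset.sum_le_sum key
      _ = 2 * (m * m) := by
          simp [Finset.card_product, Finset.card_range, mul_comm]
  have hnsq : n ^ 2 = 2 * (2 * (m * m)) := by subst hm; ring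
  have : n ^ 2 / 2 = 2 * (m * m) := by rw [hnsq]; omega
  rw [this]
  exact hC2
end

section
/- Let m ≥ 3 be odd and n ≥ 3 be even. Then the number of crossing tiles in a corner-connection knot mosaic with m rows and n columns is at most (mn + n − 4)/2 (equivalently, at most (m−1)n/2 + (n − 2)). -/
open Tile

-- Auxiliary lemmas

private lemma crossing_cp (t : Tile) (ht : isCrossing t = true) (a b : Bool) : cp t a b = true := by
  cases t <;> simp_all [isCrossing, cp]

private def rowCr (M : ℕ → ℕ → Tile) (n i : ℕ) : ℕ :=
  ((Finset.range n).filter (fun j => isCrossing (M i j) = true)).card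

private lemma crossing_rows (M : ℕ → ℕ → Tile) (m n : ℕ) :
    crossingCountRect m n M = ∑ i ∈ Finset.range m, rowCr M n i := by
  unfold crossingCountRect rowCr
  rw [Finset.card_filter, Finset.sum_product]
  exact Finset.sum_congr rfl (fun a _ => (Finset.card_filter _ _).symm)

private lemma sum_par (k t s : ℕ) (hs : s < 2) :
    ∑ c ∈ Finset.range (2*k+1), (if (t + c) % 2 = s then 2 else 0) =
      if (t + s) % 2 = 0 then 2*k + 2 else 2*k := by
  induction k with
  | zero =>
    rw [Finset.sum_range_one]
    split_ifs <;> omega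
  | succ k ih =>
    have h1 : 2 * (k+1) + 1 = (2*k+1) + 1 + 1 := by ring
    rw [h1, Finset.sum_range_succ, Finset.sum_range_succ, ih]
    split_ifs <;> omega

private lemma pair_sum (M : ℕ → ℕ → Tile) (n : ℕ) (hT0 : ∀ i, M i n = Tile.T0)
    (r q : ℕ) (hq : q < 2) (a : Bool) :
    ((∑ c ∈ Finset.range (n+1), if ((r+c) % 2 = q ∧ a.toNat ≤ r ∧ 0 ≤ c ∧
        isCrossing (M (r - a.toNat) (c - 0)) = true) then 1 else 0)
      + ∑ c ∈ Finset.range (n+1), if ((r+c) % 2 = q ∧ a.toNat ≤ r ∧ 1 ≤ c ∧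
        isCrossing (M (r - a.toNat) (c - 1)) = true) then 1 else 0)
      = if a.toNat ≤ r then rowCr M n (r - a.toNat) else 0 := by
  by_cases ha : a.toNat ≤ r
  · rw [if_pos ha, rowCr, Finset.card_filter]
    rw [Finset.sum_range_succ, Finset.sum_range_succ']
    have h1 : (if ((r+n) % 2 = q ∧ a.toNat ≤ r ∧ 0 ≤ n ∧
        isCrossing (M (r - a.toNat) (n - 0)) = true) then 1 else 0) = 0 := by
      simp [hT0, isCrossing]
    have h2 : (if ((r+0) % 2 = q ∧ a.toNat ≤ r ∧ 1 ≤ 0 ∧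
        isCrossing (M (r - a.toNat) (0 - 1)) = true) then 1 else 0) = 0 := by
      simp
    rw [h1, h2, add_zero, add_zero, ← Finset.sum_add_distrib]
    apply Finset.sum_congr rfl
    intro j _
    have hcomp : ((r + (j+1)) % 2 = q) ↔ ¬((r+j) % 2 = q) := by omega
    by_cases hp : (r+j) % 2 = q <;>
      by_cases hcr : isCrossing (M (r - a.toNat) j) = true <;>
        simp [hp, hcr, ha, hcomp]
  · rw [if_neg ha]
    simp [ha]

private lemma lower_bound (M : ℕ → ℕ → Tile) (n : ℕ) (hT0 : ∀ i, M i n = Tile.T0)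
    (r q : ℕ) (hq : q < 2) :
    (if 1 ≤ r then rowCr M n (r-1) else 0) + rowCr M n r ≤
      ∑ c ∈ Finset.range (n+1), (if (r + c) % 2 = q then vertexCount M r c else 0) := by
  have step1 : ∀ c, (∑ p : Bool × Bool, if ((r+c) % 2 = q ∧ p.1.toNat ≤ r ∧ p.2.toNat ≤ c ∧
        isCrossing (M (r - p.1.toNat) (c - p.2.toNat)) = true) then 1 else 0)
      ≤ (if (r+c) % 2 = q then vertexCount M r c else 0) := by
    intro c
    by_cases hpar : (r+c) % 2 = q
    · rw [if_pos hpar]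
      unfold vertexCount
      apply Finset.sum_le_sum
      intro p _
      by_cases hcond : ((r+c) % 2 = q ∧ p.1.toNat ≤ r ∧ p.2.toNat ≤ c ∧
          isCrossing (M (r - p.1.toNat) (c - p.2.toNat)) = true)
      · rw [if_pos hcond, if_pos ⟨hcond.2.1, hcond.2.2.1, crossing_cp _ hcond.2.2.2 _ _⟩]
      · rw [if_neg hcond]
        split <;> omega
    · rw [if_neg hpar]
      simp [hpar]
  calc (if 1 ≤ r then rowCr M n (r-1) else 0) + rowCr M n r
      = ∑ c ∈ Finset.range (n+1), ∑ p : Bool × Bool,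
          (if ((r+c) % 2 = q ∧ p.1.toNat ≤ r ∧ p.2.toNat ≤ c ∧
            isCrossing (M (r - p.1.toNat) (c - p.2.toNat)) = true) then 1 else 0) := by
        rw [Finset.sum_comm]
        rw [Fintype.sum_prod_type, Fintype.sum_bool]
        rw [Fintype.sum_bool, Fintype.sum_bool]
        have e1 := pair_sum M n hT0 r q hq true
        have e2 := pair_sum M n hT0 r q hq false
        simp only [Bool.toNat_true, Bool.toNat_false, Nat.sub_zero, Nat.zero_le, true_and, if_true] at e1 e2 ⊢
        omega
    _ ≤ _ := Finset.sum_le_sum (fun c _ => step1 c)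

private lemma vc00 (M : ℕ → ℕ → Tile)
    (h : vertexCount M 0 0 = 0 ∨ vertexCount M 0 0 = 2) :
    vertexCount M 0 0 = 0 := by
  have hle : vertexCount M 0 0 ≤ 1 := by
    unfold vertexCount
    rw [Fintype.sum_prod_type, Fintype.sum_bool, Fintype.sum_bool, Fintype.sum_bool]
    simp only [Bool.toNat_true, Bool.toNat_false, Nat.zero_le, true_and, Nat.sub_zero]
    split_ifs <;> omega
  omega

private lemma vc0n (M : ℕ → ℕ → Tile) (n : ℕ)
    (hb : M 0 n = Tile.T0)
    (h : vertexCount M 0 n = 0 ∨ vertexCount M 0 n = 2) :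
    vertexCount M 0 n = 0 := by
  have hle : vertexCount M 0 n ≤ 1 := by
    unfold vertexCount
    rw [Fintype.sum_prod_type, Fintype.sum_bool, Fintype.sum_bool, Fintype.sum_bool]
    simp only [Bool.toNat_true, Bool.toNat_false, Nat.zero_le, true_and, Nat.sub_zero,
      hb, cp, Bool.false_eq_true, and_false, false_and, if_false]
    simp only [show ¬ (1:ℕ) ≤ 0 by norm_num, false_and, and_false, if_false, zero_add, add_zero]
    exact ite_le_one le_rfl zero_le_one
  omega

private lemma vcm0 (M : ℕ → ℕ → Tile) (m : ℕ)
    (hb : M m 0 = Tile.T0)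
    (h : vertexCount M m 0 = 0 ∨ vertexCount M m 0 = 2) :
    vertexCount M m 0 = 0 := by
  have hle : vertexCount M m 0 ≤ 1 := by
    unfold vertexCount
    rw [Fintype.sum_prod_type, Fintype.sum_bool, Fintype.sum_bool, Fintype.sum_bool]
    simp only [Bool.toNat_true, Bool.toNat_false, Nat.zero_le, true_and, Nat.sub_zero,
      hb, cp, Bool.false_eq_true, and_false, false_and, if_false]
    simp only [show ¬ (1:ℕ) ≤ 0 by norm_num, false_and, and_false, if_false, zero_add, add_zero]
    exact ite_le_one le_rfl zero_le_one
  omega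

private lemma vcmn (M : ℕ → ℕ → Tile) (m n : ℕ)
    (hb1 : M m n = Tile.T0) (hb2 : M m (n-1) = Tile.T0) (hb3 : M (m-1) n = Tile.T0)
    (h : vertexCount M m n = 0 ∨ vertexCount M m n = 2) :
    vertexCount M m n = 0 := by
  have hle : vertexCount M m n ≤ 1 := by
    unfold vertexCount
    rw [Fintype.sum_prod_type, Fintype.sum_bool, Fintype.sum_bool, Fintype.sum_bool]
    simp only [Bool.toNat_true, Bool.toNat_false, Nat.zero_le, true_and, Nat.sub_zero,
      hb1, hb2, hb3, cp, Bool.false_eq_true, and_false, false_and, if_false]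
    simp only [zero_add, add_zero]
    exact ite_le_one le_rfl zero_le_one
  omega

private lemma mid_bound (M : ℕ → ℕ → Tile) (r k : ℕ)
    (h2 : ∀ c, c ≤ 2*k → vertexCount M r c = 0 ∨ vertexCount M r c = 2) :
    (∑ c ∈ Finset.range (2*k+1), if (r + c) % 2 = (r+1) % 2 then vertexCount M r c else 0)
      ≤ 2*k := by
  have h1 : (∑ c ∈ Finset.range (2*k+1), if (r + c) % 2 = (r+1) % 2 then vertexCount M r c else 0)
      ≤ ∑ c ∈ Finset.range (2*k+1), (if (r + c) % 2 = (r+1) % 2 then 2 else 0) := by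
    apply Finset.sum_le_sum
    intro c hc
    have hvc : vertexCount M r c ≤ 2 := by
      rcases h2 c (by simpa using Nat.lt_succ_iff.mp (Finset.mem_range.mp hc)) with h | h <;> omega
    split_ifs <;> omega
  rw [sum_par k r ((r+1) % 2) (by omega)] at h1
  rw [if_neg (by omega)] at h1
  exact h1

private lemma row0_bound (M : ℕ → ℕ → Tile) (k : ℕ) (hk : 2 ≤ k)
    (h2 : ∀ c, c ≤ 2*k → vertexCount M 0 c = 0 ∨ vertexCount M 0 c = 2)
    (hz0 : vertexCount M 0 0 = 0) (hzn : vertexCount M 0 (2*k) = 0) :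
    (∑ c ∈ Finset.range (2*k+1), if (0 + c) % 2 = 0 then vertexCount M 0 c else 0) + 4
      ≤ 2*k + 2 := by
  have key : ∀ c ∈ Finset.range (2*k+1),
      (if (0 + c) % 2 = 0 then vertexCount M 0 c else 0)
        + ((if c = 0 then 2 else 0) + (if c = 2*k then 2 else 0))
      ≤ (if (0 + c) % 2 = 0 then 2 else 0) := by
    intro c hc
    by_cases hc0 : c = 0
    · subst hc0
      simp only [hz0]
      split_ifs <;> omega
    by_cases hcn : c = 2*k
    · subst hcn
      simp only [hzn]
      split_ifs <;> omega
    · have hvc : vertexCount M 0 c ≤ 2 := by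
        rcases h2 c (by simpa using Nat.lt_succ_iff.mp (Finset.mem_range.mp hc)) with h | h <;> omega
      split_ifs <;> omega
  have hsum := Finset.sum_le_sum key
  rw [Finset.sum_add_distrib, Finset.sum_add_distrib] at hsum
  rw [Finset.sum_ite_eq' (Finset.range (2*k+1)) 0 (fun _ => 2)] at hsum
  rw [Finset.sum_ite_eq' (Finset.range (2*k+1)) (2*k) (fun _ => 2)] at hsum
  rw [sum_par k 0 0 (by omega)] at hsum
  simp only [Finset.mem_range] at hsum
  rw [if_pos (by omega : (0:ℕ) < 2*k+1), if_pos (by omega : 2*k < 2*k+1)] at hsum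
  norm_num at hsum ⊢
  omega

private lemma rowm_bound (M : ℕ → ℕ → Tile) (m k : ℕ) (hk : 2 ≤ k) (hm : m % 2 = 1)
    (h2 : ∀ c, c ≤ 2*k → vertexCount M m c = 0 ∨ vertexCount M m c = 2)
    (hz0 : vertexCount M m 0 = 0) (hzn : vertexCount M m (2*k) = 0) :
    (∑ c ∈ Finset.range (2*k+1), if (m + c) % 2 = 1 then vertexCount M m c else 0) + 4
      ≤ 2*k + 2 := by
  have key : ∀ c ∈ Finset.range (2*k+1),
      (if (m + c) % 2 = 1 then vertexCount M m c else 0)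
        + ((if c = 0 then 2 else 0) + (if c = 2*k then 2 else 0))
      ≤ (if (m + c) % 2 = 1 then 2 else 0) := by
    intro c hc
    by_cases hc0 : c = 0
    · subst hc0
      simp only [hz0]
      split_ifs <;> omega
    by_cases hcn : c = 2*k
    · subst hcn
      simp only [hzn]
      split_ifs <;> omega
    · have hvc : vertexCount M m c ≤ 2 := by
        rcases h2 c (by simpa using Nat.lt_succ_iff.mp (Finset.mem_range.mp hc)) with h | h <;> omega
      split_ifs <;> omega
  have hsum := Finset.sum_le_sum key
  rw [Finset.sum_add_distrib, Finset.sum_add_distrib] at hsum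
  rw [Finset.sum_ite_eq' (Finset.range (2*k+1)) 0 (fun _ => 2)] at hsum
  rw [Finset.sum_ite_eq' (Finset.range (2*k+1)) (2*k) (fun _ => 2)] at hsum
  rw [sum_par k m 1 (by omega)] at hsum
  simp only [Finset.mem_range] at hsum
  rw [if_pos (by omega : (0:ℕ) < 2*k+1), if_pos (by omega : 2*k < 2*k+1)] at hsum
  rw [if_pos (show (m+1) % 2 = 0 by omega)] at hsum
  norm_num at hsum ⊢
  omega

/-- For `m ≥ 3` odd and `n ≥ 3` even, a corner-connection knot mosaic with `m`
rows and `n` columns has at most `(m * n + n − 4) / 2` crossing tiles. -/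
theorem max_crossings_rect_odd_even
    (m n : ℕ) (hm : 3 ≤ m) (hn : 3 ≤ n) (hmpar : Odd m) (hnpar : Even n)
    (M : ℕ → ℕ → Tile) (hM : IsKnotMosaicRect m n M) :
    crossingCountRect m n M ≤ (m * n + n - 4) / 2 := by
  obtain ⟨hM1, hM2⟩ := hM
  obtain ⟨k, hk⟩ : ∃ k, n = 2 * k := ⟨n / 2, by rcases hnpar with ⟨t, ht⟩; omega⟩
  subst hk
  have hk2 : 2 ≤ k := by omega
  have hmodd : m % 2 = 1 := by rcases hmpar with ⟨t, ht⟩; omega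
  have hT0col : ∀ i, M i (2*k) = Tile.T0 := fun i => hM1 i (2*k) (Or.inr le_rfl)
  set T : ℕ → ℕ := fun r => ∑ c ∈ Finset.range (2*k+1),
    if (r + c) % 2 = (if r = m then 1 else if r = 0 then 0 else (r+1) % 2)
    then vertexCount M r c else 0 with hT
  -- lower bound
  have hlow : ∀ r, (if 1 ≤ r then rowCr M (2*k) (r-1) else 0) + rowCr M (2*k) r ≤ T r := by
    intro r
    exact lower_bound M (2*k) hT0col r _ (by split_ifs <;> omega)
  have hmain : 2 * crossingCountRect m (2*k) M ≤ ∑ r ∈ Finset.range (m+1), T r := by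
    have h1 : ∑ r ∈ Finset.range (m+1),
        ((if 1 ≤ r then rowCr M (2*k) (r-1) else 0) + rowCr M (2*k) r)
        ≤ ∑ r ∈ Finset.range (m+1), T r :=
      Finset.sum_le_sum (fun r _ => hlow r)
    have e1 : ∑ r ∈ Finset.range (m+1), (if 1 ≤ r then rowCr M (2*k) (r-1) else 0)
        = ∑ i ∈ Finset.range m, rowCr M (2*k) i := by
      rw [Finset.sum_range_succ']
      simp
    have e2 : ∑ r ∈ Finset.range (m+1), rowCr M (2*k) r
        = ∑ i ∈ Finset.range m, rowCr M (2*k) i := by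
      rw [Finset.sum_range_succ]
      have : rowCr M (2*k) m = 0 := by
        unfold rowCr
        rw [Finset.filter_false_of_mem, Finset.card_empty]
        intro j _
        simp [hM1 m j (Or.inl le_rfl), isCrossing]
      omega
    rw [Finset.sum_add_distrib, e1, e2] at h1
    rw [crossing_rows M m (2*k)]
    omega
  -- upper bound
  have hsplit : ∑ r ∈ Finset.range (m+1), T r
      = T 0 + (∑ i ∈ Finset.range (m-1), T (i+1)) + T m := by
    rw [Finset.sum_range_succ]
    rw [show Finset.range m = Finset.range ((m-1)+1) by congr 1; omega]
    rw [Finset.sum_range_succ']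
    ring
  have h0 : T 0 + 4 ≤ 2*k + 2 := by
    have hQ : T 0 = ∑ c ∈ Finset.range (2*k+1),
        if (0 + c) % 2 = 0 then vertexCount M 0 c else 0 := by
      rw [hT]
      simp [show (0:ℕ) ≠ m by omega]
    rw [hQ]
    exact row0_bound M k hk2 (fun c hc => hM2 0 c (by omega) hc)
      (vc00 M (hM2 0 0 (by omega) (by omega)))
      (vc0n M (2*k) (hT0col 0) (hM2 0 (2*k) (by omega) le_rfl))
  have hmm : T m + 4 ≤ 2*k + 2 := by
    have hQ : T m = ∑ c ∈ Finset.range (2*k+1),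
        if (m + c) % 2 = 1 then vertexCount M m c else 0 := by
      rw [hT]
      simp
    rw [hQ]
    exact rowm_bound M m k hk2 hmodd (fun c hc => hM2 m c le_rfl hc)
      (vcm0 M m (hM1 m 0 (Or.inl le_rfl)) (hM2 m 0 le_rfl (by omega)))
      (vcmn M m (2*k) (hM1 m (2*k) (Or.inl le_rfl)) (hM1 m (2*k-1) (Or.inl le_rfl))
        (hT0col (m-1)) (hM2 m (2*k) le_rfl le_rfl))
  have hmid : ∑ i ∈ Finset.range (m-1), T (i+1) ≤ (m-1) * (2*k) := by
    have h1 : ∀ i ∈ Finset.range (m-1), T (i+1) ≤ 2*k := by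
      intro i hi
      have him : i + 1 ≠ m := by
        have := Finset.mem_range.mp hi; omega
      have hQ : T (i+1) = ∑ c ∈ Finset.range (2*k+1),
          if ((i+1) + c) % 2 = ((i+1)+1) % 2 then vertexCount M (i+1) c else 0 := by
        rw [hT]
        simp [him]
      rw [hQ]
      exact mid_bound M (i+1) k (fun c hc => hM2 (i+1) c
        (by have := Finset.mem_range.mp hi; omega) hc)
    calc ∑ i ∈ Finset.range (m-1), T (i+1) ≤ ∑ i ∈ Finset.range (m-1), 2*k :=
          Finset.sum_le_sum h1
      _ = (m-1) * (2*k) := by rw [Finset.sum_const, Finset.card_range, smul_eq_mul]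
  have hsub : (m-1)*(2*k) + 2*k = m*(2*k) := by
    calc (m-1)*(2*k) + 2*k = ((m-1)+1)*(2*k) := by ring
      _ = m*(2*k) := by rw [show m-1+1 = m by omega]
  omega
end

section
/- Let n ≥ 3 and let S be a set of cells of the n × n grid {0,…,n−1} × {0,…,n−1} such that (a) every 2×2 window of the grid (the four cells {i,i+1} × {j,j+1} for 0 ≤ i,j ≤ n−2) contains at most two cells of S, and (b) none of the four corner cells (0,0), (0,n−1), (n−1,0), (n−1,n−1) belongs to S. If n is even then |S| ≤ n²/2, and if n is odd then |S| ≤ (n² + n − 4)/2. -/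
open Finset

private lemma cover_bound {ι : Type*} [DecidableEq ι] (S : Finset (ℕ × ℕ)) (I : Finset ι)
    (P : ι → Finset (ℕ × ℕ)) (b : ℕ)
    (hcov : ∀ p ∈ S, ∃ t ∈ I, p ∈ P t)
    (hb : ∀ t ∈ I, (S ∩ P t).card ≤ b) :
    S.card ≤ I.card * b := by
  have h1 : S ⊆ I.biUnion fun t => S ∩ P t := by
    intro p hp
    obtain ⟨t, ht, hpt⟩ := hcov p hp
    exact mem_biUnion.2 ⟨t, ht, mem_inter.2 ⟨hp, hpt⟩⟩
  calc S.card ≤ (I.biUnion fun t => S ∩ P t).card := card_le_card h1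
    _ ≤ ∑ t ∈ I, (S ∩ P t).card := card_biUnion_le
    _ ≤ ∑ _t ∈ I, b := sum_le_sum hb
    _ = I.card * b := by rw [sum_const, smul_eq_mul]

private lemma gauss1 (k : ℕ) : (∑ i ∈ Finset.range k, (k - i)) * 2 = k * (k + 1) := by
  induction k with
  | zero => simp
  | succ k ih =>
    have h : ∑ i ∈ Finset.range (k + 1), (k + 1 - i)
        = (∑ i ∈ Finset.range k, (k - i)) + (k + 1) := by
      rw [Finset.sum_range_succ]
      have hc : ∀ i ∈ Finset.range k, (k + 1 - i) = (k - i) + 1 := by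
        intro i hi; have := Finset.mem_range.1 hi; omega
      rw [Finset.sum_congr rfl hc, Finset.sum_add_distrib, Finset.sum_const]
      simp only [smul_eq_mul, mul_one, Finset.card_range]
      omega
    rw [h, Nat.add_mul, ih]; ring

private lemma gauss2 (k : ℕ) : (∑ i ∈ Finset.range k, (i + 1)) * 2 = k * (k + 1) := by
  induction k with
  | zero => simp
  | succ k ih =>
    rw [Finset.sum_range_succ, Nat.add_mul, ih]; ring

/-- Let `n ≥ 3` and let `S` be a set of cells of the `n × n` grid such that every
`2 × 2` window of the grid contains at most two cells of `S` and none of the four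
corner cells belongs to `S`.  If `n` is even then `|S| ≤ n² / 2`, and if `n` is odd
then `|S| ≤ (n² + n − 4) / 2`. -/
theorem window_bounded_set_card_bound
    (n : ℕ) (hn : 3 ≤ n) (S : Finset (ℕ × ℕ))
    (hsub : S ⊆ Finset.range n ×ˢ Finset.range n)
    (hwin : ∀ i j, i + 2 ≤ n → j + 2 ≤ n →
      (S ∩ (({i, i + 1} : Finset ℕ) ×ˢ ({j, j + 1} : Finset ℕ))).card ≤ 2)
    (hc00 : (0, 0) ∉ S) (hc01 : (0, n - 1) ∉ S)
    (hc10 : (n - 1, 0) ∉ S) (hc11 : (n - 1, n - 1) ∉ S) :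
    (Even n → S.card ≤ n ^ 2 / 2) ∧
    (Odd n → S.card ≤ (n ^ 2 + n - 4) / 2) := by
  constructor
  · -- even case: tile the grid by 2×2 windows
    intro hev
    obtain ⟨k, hk⟩ := hev
    have hb : S.card ≤ (Finset.range k ×ˢ Finset.range k).card * 2 := by
      apply cover_bound S _
        (fun t => ({2 * t.1, 2 * t.1 + 1} : Finset ℕ) ×ˢ ({2 * t.2, 2 * t.2 + 1} : Finset ℕ))
      · intro p hp
        have hp' := hsub hp
        simp only [mem_product, mem_range] at hp'
        refine ⟨(p.1 / 2, p.2 / 2), ?_, ?_⟩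
        · simp only [mem_product, mem_range]; omega
        · simp only [mem_product, mem_insert, mem_singleton]; omega
      · rintro ⟨a, b⟩ ht
        simp only [mem_product, mem_range] at ht
        exact hwin (2 * a) (2 * b) (by omega) (by omega)
    rw [card_product, card_range] at hb
    have hsq : n ^ 2 = 4 * (k * k) := by subst hk; ring
    omega
  · -- odd case
    intro hodd
    obtain ⟨k, hk⟩ := hodd
    have hk1 : 1 ≤ k := by omega
    -- type A windows: rows (2i, 2i+1), cols (2j, 2j+1), i < k, j < k - i
    set IA : Finset (Σ _ : ℕ, ℕ) := (Finset.range k).sigma (fun i => Finset.range (k - i)) with hIA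
    set PA : (Σ _ : ℕ, ℕ) → Finset (ℕ × ℕ) := fun t =>
      ({2 * t.1, 2 * t.1 + 1} : Finset ℕ) ×ˢ ({2 * t.2, 2 * t.2 + 1} : Finset ℕ) with hPA
    -- type B windows: rows (2i+1, 2i+2), cols (2k-1-2i+2j, +1), i < k, j ≤ i
    set IB : Finset (Σ _ : ℕ, ℕ) := (Finset.range k).sigma (fun i => Finset.range (i + 1)) with hIB
    set PB : (Σ _ : ℕ, ℕ) → Finset (ℕ × ℕ) := fun t =>
      ({2 * t.1 + 1, 2 * t.1 + 1 + 1} : Finset ℕ) ×ˢ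
        ({2 * k - 1 - 2 * t.1 + 2 * t.2, 2 * k - 1 - 2 * t.1 + 2 * t.2 + 1} : Finset ℕ) with hPB
    set UA := IA.biUnion PA with hUA
    set UB := IB.biUnion PB with hUB
    have eA : (S ∩ UA).card + (S \ UA).card = S.card := card_inter_add_card_sdiff S UA
    have eB : ((S \ UA) ∩ UB).card + ((S \ UA) \ UB).card = (S \ UA).card :=
      card_inter_add_card_sdiff (S \ UA) UB
    -- bound the A part
    have hA : (S ∩ UA).card ≤ IA.card * 2 := by
      apply cover_bound _ IA PA
      · intro p hp
        exact mem_biUnion.1 (mem_inter.1 hp).2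
      · rintro ⟨i, j⟩ ht
        simp only [hIA, mem_sigma, mem_range] at ht
        refine le_trans (card_le_card ?_) (hwin (2 * i) (2 * j) (by omega) (by omega))
        exact inter_subset_inter inter_subset_left (Finset.Subset.refl _)
    -- bound the B part
    have hB : ((S \ UA) ∩ UB).card ≤ IB.card * 2 := by
      apply cover_bound _ IB PB
      · intro p hp
        exact mem_biUnion.1 (mem_inter.1 hp).2
      · rintro ⟨i, j⟩ ht
        simp only [hIB, mem_sigma, mem_range] at ht
        refine le_trans (card_le_card ?_)
          (hwin (2 * i + 1) (2 * k - 1 - 2 * i + 2 * j) (by omega) (by omega))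
        intro x hx
        simp only [mem_inter, mem_sdiff] at hx ⊢
        tauto
    -- the rest lies on the antidiagonal
    have hC : ((S \ UA) \ UB) ⊆
        (Finset.Icc 1 (k - 1)).image (fun i => (2 * i, 2 * k - 2 * i)) := by
      intro p hp
      simp only [mem_sdiff] at hp
      obtain ⟨⟨hpS, hpA⟩, hpB⟩ := hp
      have hp' := hsub hpS
      simp only [mem_product, mem_range] at hp'
      obtain ⟨hr, hc⟩ := hp'
      -- not covered by A
      have fA : ¬ (p.1 / 2 < k ∧ p.2 / 2 < k - p.1 / 2) := by
        rintro ⟨h1, h2⟩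
        apply hpA
        rw [hUA]
        refine mem_biUnion.2 ⟨⟨p.1 / 2, p.2 / 2⟩, ?_, ?_⟩
        · simp only [hIA, mem_sigma, mem_range]; exact ⟨h1, h2⟩
        · simp only [hPA, mem_product, mem_insert, mem_singleton]; omega
      -- not covered by B
      have fB : ¬ (1 ≤ p.1 ∧ (p.1 - 1) / 2 < k ∧ 2 * k - 1 - 2 * ((p.1 - 1) / 2) ≤ p.2) := by
        rintro ⟨h1, h2, h3⟩
        apply hpB
        rw [hUB]
        refine mem_biUnion.2
          ⟨⟨(p.1 - 1) / 2, (p.2 - (2 * k - 1 - 2 * ((p.1 - 1) / 2))) / 2⟩, ?_, ?_⟩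
        · simp only [hIB, mem_sigma, mem_range]
          constructor
          · exact h2
          · omega
        · simp only [hPB, mem_product, mem_insert, mem_singleton]; omega
      have hne1 : ¬ (p.1 = 0 ∧ p.2 = n - 1) := by
        rintro ⟨h1, h2⟩
        exact hc01 (by rwa [← h1, ← h2, Prod.mk.eta])
      have hne2 : ¬ (p.1 = n - 1 ∧ p.2 = 0) := by
        rintro ⟨h1, h2⟩
        exact hc10 (by rwa [← h1, ← h2, Prod.mk.eta])
      simp only [mem_image, mem_Icc]
      refine ⟨p.1 / 2, by omega, ?_⟩
      have h1 : 2 * (p.1 / 2) = p.1 := by omega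
      have h2 : 2 * k - 2 * (p.1 / 2) = p.2 := by omega
      rw [h2, h1, Prod.mk.eta]
    have hCcard : ((S \ UA) \ UB).card ≤ k - 1 := by
      refine le_trans (card_le_card hC) (le_trans card_image_le ?_)
      rw [Nat.card_Icc]; omega
    -- sum everything up
    have cA : IA.card * 2 = k * k + k := by
      rw [hIA, card_sigma]
      simp only [card_range]
      rw [gauss1]; ring
    have cB : IB.card * 2 = k * k + k := by
      rw [hIB, card_sigma]
      simp only [card_range]
      rw [gauss2]; ring
    have hsq : n ^ 2 = 4 * (k * k) + 4 * k + 1 := by subst hk; ring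
    omega
end
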